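/- If a formal power series f(x) = x + Σ fₖ x^{k+1}/(k+1)! over ℚ satisfies the one-variable equation q(x)² − f₁q(−x) + q'(−x) = C with q = 1/f, then 2f₆ = 315f₁⁶ − 945f₁⁴f₂ + 345f₁³f₃ + 660f₁²f₂² − 93f₁²f₄ − 290f₁f₂f₃ − 60f₂³ + 18f₁f₅ + 32f₂f₄ + 20f₃². -/

import Mathlib

/-- Substitution `x ↦ -x` in a Laurent series. -/
noncomputable def negSub (q : LaurentSeries ℚ) : LaurentSeries ℚ :=
  { coeff := fun n => (-1 : ℚ) ^ n * q.coeff n,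
    isPWO_support' := q.isPWO_support'.mono (by
      intro n hn
      simp only [Function.mem_support] at hn ⊢
      intro h
      exact hn (by rw [h, mul_zero])) }

/-- `q = 1/f` as a Laurent series. -/
noncomputable def lq (f : PowerSeries ℚ) : LaurentSeries ℚ :=
  (HahnSeries.ofPowerSeries ℤ ℚ f)⁻¹

/-- Derivative of Laurent series. -/
noncomputable def lD : LaurentSeries ℚ → LaurentSeries ℚ := LaurentSeries.derivative ℚ

/-- The one-variable functional-differential equation
`q(x)² − f₁ q(−x) + q'(−x) = C` for `q = 1/f`. -/
def OneVarEq (f : PowerSeries ℚ) (f1 C : ℚ) : Prop :=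
  (lq f) ^ 2 - f1 • negSub (lq f) + negSub (lD (lq f)) = C • (1 : LaurentSeries ℚ)

theorem negSub_coeff (q : LaurentSeries ℚ) (n : ℤ) :
    (negSub q).coeff n = (-1 : ℚ) ^ n * q.coeff n := rfl

/-- The relation on `f₆` obtained from the coefficient of `x⁴` in the one-variable
equation `q(x)² − f₁ q(−x) + q'(−x) = C`. -/
theorem stmt_18 (f : PowerSeries ℚ) (C : ℚ) (fc : ℕ → ℚ)
    (h0 : PowerSeries.constantCoeff f = 0) (h1 : PowerSeries.coeff 1 f = 1)
    (hfc : ∀ k, 1 ≤ k → PowerSeries.coeff (k + 1) f = fc k / ((k + 1).factorial : ℚ))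
    (heq : OneVarEq f (fc 1) C) :
    2 * fc 6 = 315 * (fc 1) ^ 6 - 945 * (fc 1) ^ 4 * fc 2 + 345 * (fc 1) ^ 3 * fc 3
      + 660 * (fc 1) ^ 2 * (fc 2) ^ 2 - 93 * (fc 1) ^ 2 * fc 4 - 290 * fc 1 * fc 2 * fc 3
      - 60 * (fc 2) ^ 3 + 18 * fc 1 * fc 5 + 32 * fc 2 * fc 4 + 20 * (fc 3) ^ 2 := by
  classical
  set u : PowerSeries ℚ := PowerSeries.mk (fun n => PowerSeries.coeff (n + 1) f) with hu
  have hu0 : PowerSeries.constantCoeff u ≠ 0 := by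
    have : PowerSeries.constantCoeff u = PowerSeries.coeff 1 f := by
      rw [← PowerSeries.coeff_zero_eq_constantCoeff, hu, PowerSeries.coeff_mk]
    rw [this, h1]; norm_num
  have hfXu : f = PowerSeries.X * u := by
    ext n
    cases n with
    | zero =>
      rw [PowerSeries.coeff_zero_eq_constantCoeff]
      simp [h0]
    | succ n => rw [PowerSeries.coeff_succ_X_mul, hu, PowerSeries.coeff_mk]
  set v : PowerSeries ℚ := u⁻¹ with hv
  have huv : u * v = 1 := PowerSeries.mul_inv_cancel u hu0
  -- express lq f explicitly
  have hq : lq f = HahnSeries.single (-1 : ℤ) (1 : ℚ) * HahnSeries.ofPowerSeries ℤ ℚ v := by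
    rw [lq]
    apply inv_eq_of_mul_eq_one_right
    rw [hfXu, map_mul, HahnSeries.ofPowerSeries_X]
    have : (HahnSeries.single (1 : ℤ) (1 : ℚ)) * HahnSeries.ofPowerSeries ℤ ℚ u *
        (HahnSeries.single (-1 : ℤ) (1 : ℚ) * HahnSeries.ofPowerSeries ℤ ℚ v)
        = (HahnSeries.single (1 : ℤ) (1 : ℚ) * HahnSeries.single (-1 : ℤ) (1 : ℚ)) *
          (HahnSeries.ofPowerSeries ℤ ℚ u * HahnSeries.ofPowerSeries ℤ ℚ v) := by ring
    rw [this, HahnSeries.single_mul_single, ← map_mul, huv]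
    norm_num
  have hWc : ∀ n : ℕ, (HahnSeries.ofPowerSeries ℤ ℚ v).coeff (n : ℤ)
      = PowerSeries.coeff n v := fun n => HahnSeries.ofPowerSeries_apply_coeff v n
  have hW2c : ∀ n : ℕ, (HahnSeries.ofPowerSeries ℤ ℚ (v ^ 2)).coeff (n : ℤ)
      = PowerSeries.coeff n (v ^ 2) := fun n => HahnSeries.ofPowerSeries_apply_coeff _ n
  -- the three coefficient computations
  have hA : ((lq f) ^ 2).coeff (4 : ℤ) = PowerSeries.coeff 6 (v ^ 2) := by
    have hs : (HahnSeries.single (-1 : ℤ) (1 : ℚ)) ^ 2 = HahnSeries.single (-2 : ℤ) (1 : ℚ) := by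
      rw [sq, HahnSeries.single_mul_single]; norm_num
    rw [hq, mul_pow, hs, ← map_pow, show (4 : ℤ) = ((6 : ℕ) : ℤ) + (-2 : ℤ) by norm_num,
      HahnSeries.coeff_single_mul_add, one_mul, hW2c]
  have hB : (lq f).coeff (4 : ℤ) = PowerSeries.coeff 5 v := by
    rw [hq, show (4 : ℤ) = ((5 : ℕ) : ℤ) + (-1 : ℤ) by norm_num,
      HahnSeries.coeff_single_mul_add, one_mul, hWc]
  have hB' : (lq f).coeff (5 : ℤ) = PowerSeries.coeff 6 v := by
    rw [hq, show (5 : ℤ) = ((6 : ℕ) : ℤ) + (-1 : ℤ) by norm_num,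
      HahnSeries.coeff_single_mul_add, one_mul, hWc]
  have hD : (lD (lq f)).coeff (4 : ℤ) = 5 * PowerSeries.coeff 6 v := by
    rw [lD, LaurentSeries.derivative_apply, LaurentSeries.hasseDeriv_coeff]
    have h5 : (4 : ℤ) + ((1 : ℕ) : ℤ) = (5 : ℤ) := by norm_num
    rw [h5, Ring.choose_one_right, hB', zsmul_eq_mul]
    norm_num
  -- extract coefficient 4 of the equation
  have h4 := congrArg (fun s : LaurentSeries ℚ => s.coeff (4 : ℤ)) heq
  simp only [HahnSeries.coeff_add, HahnSeries.coeff_sub, HahnSeries.coeff_smul,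
    negSub_coeff, Pi.sub_apply, Pi.add_apply, HahnSeries.coeff_one] at h4
  rw [hA, hB, hD] at h4
  norm_num at h4
  -- h4 : coeff 6 (v^2) - fc 1 * coeff 5 v + 5 * coeff 6 v = 0
  -- coefficients of u
  have hu1 : PowerSeries.coeff 1 u = fc 1 / 2 := by
    rw [hu, PowerSeries.coeff_mk, hfc 1 (by norm_num)]; norm_num
  have hu2 : PowerSeries.coeff 2 u = fc 2 / 6 := by
    rw [hu, PowerSeries.coeff_mk, hfc 2 (by norm_num)]; norm_num [Nat.factorial]
  have hu3 : PowerSeries.coeff 3 u = fc 3 / 24 := by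
    rw [hu, PowerSeries.coeff_mk, hfc 3 (by norm_num)]; norm_num [Nat.factorial]
  have hu4 : PowerSeries.coeff 4 u = fc 4 / 120 := by
    rw [hu, PowerSeries.coeff_mk, hfc 4 (by norm_num)]; norm_num [Nat.factorial]
  have hu5 : PowerSeries.coeff 5 u = fc 5 / 720 := by
    rw [hu, PowerSeries.coeff_mk, hfc 5 (by norm_num)]; norm_num [Nat.factorial]
  have hu6 : PowerSeries.coeff 6 u = fc 6 / 5040 := by
    rw [hu, PowerSeries.coeff_mk, hfc 6 (by norm_num)]; norm_num [Nat.factorial]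
  have hu0' : PowerSeries.coeff 0 u = 1 := by
    rw [hu, PowerSeries.coeff_mk]; exact h1
  -- coefficient equations for v from u * v = 1
  have ecoeff : ∀ n : ℕ, PowerSeries.coeff n (u * v) = PowerSeries.coeff n 1 :=
    fun n => congrArg (PowerSeries.coeff n) huv
  have e0 := ecoeff 0
  have e1 := ecoeff 1
  have e2 := ecoeff 2
  have e3 := ecoeff 3
  have e4 := ecoeff 4
  have e5 := ecoeff 5
  have e6 := ecoeff 6
  simp only [PowerSeries.coeff_mul, Finset.Nat.sum_antidiagonal_eq_sum_range_succ_mk,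
    Finset.sum_range_succ, Finset.sum_range_zero, zero_add, PowerSeries.coeff_one,
    hu0', hu1, hu2, hu3, hu4, hu5, hu6] at e0 e1 e2 e3 e4 e5 e6
  norm_num at e0 e1 e2 e3 e4 e5 e6
  -- solve for coefficients of v
  have hv0 : PowerSeries.constantCoeff v = 1 := e0
  have hv1 : PowerSeries.coeff 1 v = -(1/2) * fc 1 := by
    linear_combination e1 - (fc 1 / 2) * hv0
  have hv2 : PowerSeries.coeff 2 v = -(1/6) * fc 2 + (1/4) * fc 1 ^ 2 := by
    linear_combination e2 - (fc 1 / 2) * hv1 - (fc 2 / 6) * hv0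
  have hv3 : PowerSeries.coeff 3 v
      = -(1/24) * fc 3 + (1/6) * fc 1 * fc 2 - (1/8) * fc 1 ^ 3 := by
    linear_combination e3 - (fc 1 / 2) * hv2 - (fc 2 / 6) * hv1 - (fc 3 / 24) * hv0
  have hv4 : PowerSeries.coeff 4 v = -(1/120) * fc 4 + (1/36) * fc 2 ^ 2
      + (1/24) * fc 1 * fc 3 - (1/8) * fc 1 ^ 2 * fc 2 + (1/16) * fc 1 ^ 4 := by
    linear_combination e4 - (fc 1 / 2) * hv3 - (fc 2 / 6) * hv2 - (fc 3 / 24) * hv1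
      - (fc 4 / 120) * hv0
  have hv5 : PowerSeries.coeff 5 v = -(1/720) * fc 5 + (1/72) * fc 2 * fc 3
      + (1/120) * fc 1 * fc 4 - (1/24) * fc 1 * fc 2 ^ 2 - (1/32) * fc 1 ^ 2 * fc 3
      + (1/12) * fc 1 ^ 3 * fc 2 - (1/32) * fc 1 ^ 5 := by
    linear_combination e5 - (fc 1 / 2) * hv4 - (fc 2 / 6) * hv3 - (fc 3 / 24) * hv2
      - (fc 4 / 120) * hv1 - (fc 5 / 720) * hv0
  have hv6 : PowerSeries.coeff 6 v = -(1/5040) * fc 6 + (1/576) * fc 3 ^ 2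
      + (1/360) * fc 2 * fc 4 - (1/216) * fc 2 ^ 3 + (1/720) * fc 1 * fc 5
      - (1/48) * fc 1 * fc 2 * fc 3 - (1/160) * fc 1 ^ 2 * fc 4 + (1/24) * fc 1 ^ 2 * fc 2 ^ 2
      + (1/48) * fc 1 ^ 3 * fc 3 - (5/96) * fc 1 ^ 4 * fc 2 + (1/64) * fc 1 ^ 6 := by
    linear_combination e6 - (fc 1 / 2) * hv5 - (fc 2 / 6) * hv4 - (fc 3 / 24) * hv3
      - (fc 4 / 120) * hv2 - (fc 5 / 720) * hv1 - (fc 6 / 5040) * hv0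
  -- expand coeff 6 (v^2) in h4
  rw [sq, PowerSeries.coeff_mul] at h4
  simp only [Finset.Nat.sum_antidiagonal_eq_sum_range_succ_mk, Finset.sum_range_succ,
    Finset.sum_range_zero, zero_add] at h4
  norm_num [PowerSeries.coeff_zero_eq_constantCoeff, hv0, hv1, hv2, hv3, hv4, hv5, hv6] at h4
  linear_combination (-1440 : ℚ) * h4
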